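/- For integers m, n ≥ 1, let P be a coarsening of the column set of (m+2)P_n with |P| = k ≥ 2, and let F be a symmetric subset of P². Let X and X' be distinct sets in P such that (X,X) ∈ F, (X',X') ∈ F, and (X,X') ∉ F. If the (P,F)-flip G of (m+2)P_n has a ⋃P-path from X to X' (a path in G with one end in X, the other end in X', and no internal vertex in ⋃_{Y∈P} Y), then G contains a (k−1)-flipped mP_n as a pivot-minor. -/

import Mathlib

open SimpleGraph

universe u v

/-! ### Basic graph operations: flips, local complementation, pivoting, pivot-minors -/

/-- Flip the adjacency of `G` exactly at the pairs of distinct vertices where the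
(symmetrized) predicate `p` holds. -/
def sdFlip {V : Type u} (G : SimpleGraph V) (p : V → V → Prop) : SimpleGraph V where
  Adj x y := x ≠ y ∧ Xor' (G.Adj x y) (p x y ∨ p y x)
  symm := by
    constructor
    intro x y h
    refine ⟨h.1.symm, ?_⟩
    have h2 := h.2
    rwa [G.adj_comm x y, or_comm] at h2
  loopless := by
    constructor
    intro x h
    exact h.1 rfl

/-- Local complementation `G * v`: complement the adjacency inside the neighborhood of `v`. -/
def localComp {V : Type u} (G : SimpleGraph V) (v : V) : SimpleGraph V :=
  sdFlip G (fun x y => G.Adj v x ∧ G.Adj v y)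

/-- Pivoting an edge `uv`: `G ∧ uv = G * u * v * u`. -/
def pivot {V : Type u} (G : SimpleGraph V) (u v : V) : SimpleGraph V :=
  localComp (localComp (localComp G u) v) u

/-- Applying a sequence of pivots. -/
def pivotSeq {V : Type u} (G : SimpleGraph V) : List (V × V) → SimpleGraph V
  | [] => G
  | e :: l => pivotSeq (pivot G e.1 e.2) l

/-- Each pivot in the sequence is performed on an edge of the current graph. -/
def ValidPivots {V : Type u} (G : SimpleGraph V) : List (V × V) → Prop
  | [] => True
  | e :: l => G.Adj e.1 e.2 ∧ ValidPivots (pivot G e.1 e.2) l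

/-- `H` is a pivot-minor of `G`: `H` is isomorphic to a graph obtained from `G` by a sequence of
pivotings (on edges of the current graph) and vertex deletions. -/
def IsPivotMinorOf {W : Type v} {V : Type u} (H : SimpleGraph W) (G : SimpleGraph V) : Prop :=
  ∃ (l : List (V × V)) (S : Set V), ValidPivots G l ∧
    Nonempty (H ≃g (pivotSeq G l).induce S)

/-! ### The half-graph join `G △ H` -/

/-- `G △ H`: the disjoint union of `G` and `H` together with the half graph joining them:
the `i`-th vertex of `G` is adjacent to the `j`-th vertex of `H` iff `i ≥ j`. -/
def halfJoin {n : ℕ} (G H : SimpleGraph (Fin n)) : SimpleGraph (Fin n ⊕ Fin n) where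
  Adj x y :=
    match x, y with
    | Sum.inl i, Sum.inl i' => G.Adj i i'
    | Sum.inr j, Sum.inr j' => H.Adj j j'
    | Sum.inl i, Sum.inr j => j ≤ i
    | Sum.inr j, Sum.inl i => j ≤ i
  symm := by
    constructor
    rintro (i | i) (j | j) h
    · exact G.adj_symm h
    · exact h
    · exact h
    · exact H.adj_symm h
  loopless := by
    constructor
    rintro (i | i) h
    · exact G.irrefl h
    · exact H.irrefl h

/-! ### Flips by a set, by a pair of sets, and by a collection of sets -/

/-- The `X`-flip of `G`: complement the adjacency inside `X`. (The `∅`-flip is `G` itself.) -/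
def setFlip {V : Type u} (G : SimpleGraph V) (X : Set V) : SimpleGraph V :=
  sdFlip G (fun x y => x ∈ X ∧ y ∈ X)

/-- `G * (X, Y)`: complement the adjacency between `X` and `Y`. -/
def pairFlip {V : Type u} (G : SimpleGraph V) (X Y : Set V) : SimpleGraph V :=
  sdFlip G (fun x y => x ∈ X ∧ y ∈ Y)

open Classical in
/-- The member of the collection `P` containing `v`, if any, and `{v}` otherwise. -/
noncomputable def blockOf {V : Type u} (P : Set (Set V)) (v : V) : Set V :=
  if h : ∃ X ∈ P, v ∈ X then h.choose else {v}

/-- A subset `F ⊆ P²` is symmetric if `(X,X') ∈ F` implies `(X',X) ∈ F`. -/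
def SymmRelSet {α : Type u} (F : Set (α × α)) : Prop :=
  ∀ a b : α, (a, b) ∈ F → (b, a) ∈ F

/-- The `(P,F)`-flip `H ⊕ (P,F)` of `H`: distinct vertices `u,v` are adjacent iff
`H.Adj u v` XOR `(P(u), P(v)) ∈ F`. -/
noncomputable def collFlip {V : Type u} (H : SimpleGraph V) (P : Set (Set V))
    (F : Set (Set V × Set V)) : SimpleGraph V :=
  sdFlip H (fun x y => (blockOf P x, blockOf P y) ∈ F)

/-- `P` is a collection of pairwise disjoint non-empty subsets. -/
def IsDisjNonemptyColl {V : Type u} (P : Set (Set V)) : Prop :=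
  (∀ X ∈ P, X.Nonempty) ∧ P.PairwiseDisjoint id

/-- `Q` is a coarsening of `P`: a collection of disjoint non-empty sets,
each a union of members of `P`. -/
def IsCoarsening {α : Type u} (Q P : Set (Set α)) : Prop :=
  IsDisjNonemptyColl Q ∧ ∀ X ∈ Q, ∃ C ⊆ P, X = ⋃₀ C

/-! ### The graph `mPₙ` and flipped `mPₙ`'s -/

/-- `mPₙ`: the disjoint union of `m` copies of the path `Pₙ`, with vertex set `[m] × [n]`. -/
def pathsGraph (m n : ℕ) : SimpleGraph (Fin m × Fin n) where
  Adj x y := x.1 = y.1 ∧ (pathGraph n).Adj x.2 y.2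
  symm := by
    constructor
    rintro ⟨i, a⟩ ⟨j, b⟩ ⟨h1, h2⟩
    exact ⟨h1.symm, (pathGraph n).adj_symm h2⟩
  loopless := by
    constructor
    rintro ⟨i, a⟩ ⟨_, h⟩
    exact (pathGraph n).irrefl h

/-- The `j`-th column of `mPₙ`. -/
def column (m n : ℕ) (j : Fin n) : Set (Fin m × Fin n) := {p | p.2 = j}

/-- The column set of `mPₙ`. -/
def columnSet (m n : ℕ) : Set (Set (Fin m × Fin n)) := Set.range (column m n)

/-- A flipped `mPₙ`: a `P`-flip of `mPₙ` where `P` is a coarsening of the column set. -/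
def IsFlippedPaths (m n : ℕ) (G : SimpleGraph (Fin m × Fin n)) : Prop :=
  ∃ (P : Set (Set (Fin m × Fin n))) (F : Set (Set (Fin m × Fin n) × Set (Fin m × Fin n))),
    IsCoarsening P (columnSet m n) ∧ F ⊆ P ×ˢ P ∧ SymmRelSet F ∧
    G = collFlip (pathsGraph m n) P F

/-- A `k`-flipped `mPₙ`: a flipped `mPₙ` with `|P| ≤ k`. -/
def IsKFlippedPaths (k m n : ℕ) (G : SimpleGraph (Fin m × Fin n)) : Prop :=
  ∃ (P : Set (Set (Fin m × Fin n))) (F : Set (Set (Fin m × Fin n) × Set (Fin m × Fin n))),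
    IsCoarsening P (columnSet m n) ∧ P.ncard ≤ k ∧ F ⊆ P ×ˢ P ∧ SymmRelSet F ∧
    G = collFlip (pathsGraph m n) P F

/-! ### Cut-rank and rank-depth -/

open Classical in
/-- The cut-rank `ρ_G(S)`: the rank over GF(2) of the `S × (V ∖ S)` submatrix of the
adjacency matrix of `G`. -/
noncomputable def cutRank {V : Type u} [Fintype V] (G : SimpleGraph V) (S : Set V) : ℕ :=
  Matrix.rank (Matrix.of fun (i : S) (j : (Sᶜ : Set V)) =>
    if G.Adj (i : V) (j : V) then (1 : ZMod 2) else 0)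

/-- The rank-depth of `G`: the least `k` such that `G` has a decomposition `(T, σ)` into a
tree `T` with the vertices of `G` identified with the leaves of `T` via `σ`, of width at
most `k` and radius at most `k`.  The width condition is expressed as: for every non-leaf
node `v` of `T` and every set `S ⊆ V(G)` that is a union of parts of the partition of `V(G)`
induced by the components of `T - v`, we have `ρ_G(S) ≤ k`. -/
noncomputable def rankDepth {V : Type u} [Fintype V] (G : SimpleGraph V) : ℕ :=
  sInf {k : ℕ |
    ∃ (N : ℕ) (T : SimpleGraph (Fin N))
      (σ : V ≃ {x : Fin N // (T.neighborSet x).ncard ≤ 1}),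
      T.IsTree ∧
      (∃ c : Fin N, ∀ x : Fin N, T.dist c x ≤ k) ∧
      (∀ x : Fin N, 1 < (T.neighborSet x).ncard →
        ∀ S : Set V,
          (∀ a b : V, a ∈ S →
            (∃ w : T.Walk ((σ a : {x : Fin N // (T.neighborSet x).ncard ≤ 1}) : Fin N)
                ((σ b : {x : Fin N // (T.neighborSet x).ncard ≤ 1}) : Fin N),
              x ∉ w.support) → b ∈ S) →
          cutRank G S ≤ k)}

/-! ### Restrictions of collections, and the sets `C_F`, `L_F`, `R_F`, `D_F` -/

/-- The restriction `P|_{S}` of a collection of subsets of `V` to a subset `S`. -/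
def restrictColl {V : Type u} (P : Set (Set V)) (S : Set V) : Set (Set S) :=
  {Y | ∃ X ∈ P, (Subtype.val ⁻¹' X : Set S).Nonempty ∧ Y = (Subtype.val ⁻¹' X : Set S)}

/-- The restriction `F|_{S}` of a collection of pairs of subsets of `V` to a subset `S`. -/
def restrictF {V : Type u} (F : Set (Set V × Set V)) (S : Set V) : Set (Set S × Set S) :=
  {q | ∃ p ∈ F, (Subtype.val ⁻¹' p.1 : Set S).Nonempty ∧ (Subtype.val ⁻¹' p.2 : Set S).Nonempty ∧
      q = ((Subtype.val ⁻¹' p.1 : Set S), (Subtype.val ⁻¹' p.2 : Set S))}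

/-- `C_F(X,X') = {Y ∈ P : (X,Y) ∈ F and (X',Y) ∈ F}`. -/
def CF {V : Type u} (P : Set (Set V)) (F : Set (Set V × Set V)) (X X' : Set V) : Set (Set V) :=
  {Y ∈ P | (X, Y) ∈ F ∧ (X', Y) ∈ F}

/-- `L_F(X,X') = {Y ∈ P : (X,Y) ∈ F and (X',Y) ∉ F}`. -/
def LF {V : Type u} (P : Set (Set V)) (F : Set (Set V × Set V)) (X X' : Set V) : Set (Set V) :=
  {Y ∈ P | (X, Y) ∈ F ∧ (X', Y) ∉ F}

/-- `R_F(X,X') = {Y ∈ P : (X,Y) ∉ F and (X',Y) ∈ F}`. -/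
def RF {V : Type u} (P : Set (Set V)) (F : Set (Set V × Set V)) (X X' : Set V) : Set (Set V) :=
  {Y ∈ P | (X, Y) ∉ F ∧ (X', Y) ∈ F}

/-- `D_F(X,X') = (C×L) ∪ (C×R) ∪ (L×R) ∪ (L×C) ∪ (R×C) ∪ (R×L)`. -/
def DF {V : Type u} (P : Set (Set V)) (F : Set (Set V × Set V)) (X X' : Set V) :
    Set (Set V × Set V) :=
  (CF P F X X' ×ˢ LF P F X X') ∪ (CF P F X X' ×ˢ RF P F X X') ∪ (LF P F X X' ×ˢ RF P F X X') ∪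
  (LF P F X X' ×ˢ CF P F X X') ∪ (RF P F X X' ×ˢ CF P F X X') ∪ (RF P F X X' ×ˢ LF P F X X')

/-- The set of `t` consecutive vertices of the path `P_s` starting at position `i` (0-indexed). -/
def consec (s i t : ℕ) : Set (Fin s) := {x | i ≤ (x : ℕ) ∧ (x : ℕ) < i + t}

/-- An `(s,t)`-path: a graph isomorphic to the `X`-flip of `P_s` for a set `X` of `t`
consecutive vertices of `P_s`. -/
def IsSTPath (s t : ℕ) {W : Type v} (G : SimpleGraph W) : Prop :=
  ∃ i : ℕ, i + t ≤ s ∧ Nonempty (G ≃g setFlip (pathGraph s) (consec s i t))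

/-! ### Auxiliary lemmas -/

set_option maxHeartbeats 1000000

lemma sdFlip_adj {V : Type u} (G : SimpleGraph V) (p : V → V → Prop) (x y : V) :
    (sdFlip G p).Adj x y ↔ x ≠ y ∧ Xor' (G.Adj x y) (p x y ∨ p y x) := Iff.rfl

lemma localComp_adj {V : Type u} (G : SimpleGraph V) (v x y : V) :
    (localComp G v).Adj x y ↔ x ≠ y ∧ Xor' (G.Adj x y) (G.Adj v x ∧ G.Adj v y) := by
  rw [localComp, sdFlip_adj]
  have : (G.Adj v x ∧ G.Adj v y) ∨ (G.Adj v y ∧ G.Adj v x) ↔ G.Adj v x ∧ G.Adj v y := by tauto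
  rw [this]

lemma pivot_adj_other {V : Type u} {G : SimpleGraph V} {a b : V} (hab : G.Adj a b)
    {x y : V} (hxa : x ≠ a) (hxb : x ≠ b) (hya : y ≠ a) (hyb : y ≠ b) :
    (pivot G a b).Adj x y ↔
      Xor' (G.Adj x y) (Xor' (G.Adj a x ∧ G.Adj b y) (G.Adj b x ∧ G.Adj a y)) := by
  have hba : G.Adj b a := hab.symm
  have hne : a ≠ b := hab.ne
  by_cases hxy : x = y
  · subst hxy
    simp only [pivot, localComp_adj, ne_eq, not_true_eq_false, false_and, Xor', Xor]
    have h1 : ¬ G.Adj x x := G.irrefl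
    tauto
  · simp only [pivot, localComp_adj, ne_eq]
    have h1 : ¬ G.Adj x x := G.irrefl
    have h2 : ¬ G.Adj a a := G.irrefl
    have h3 : ¬ G.Adj b b := G.irrefl
    by_cases e : G.Adj x y <;> by_cases p1 : G.Adj a x <;> by_cases p2 : G.Adj b x <;>
      by_cases p3 : G.Adj a y <;> by_cases p4 : G.Adj b y <;>
      simp_all [Xor', Xor, hxy, hxa, hxb, hya, hyb, hne, Ne.symm hxa, Ne.symm hxb, Ne.symm hya,
        Ne.symm hyb, Ne.symm hne]

lemma core {V : Type u} (S A B : Set V) : ∀ (t : ℕ) (G : SimpleGraph V) (u : ℕ → V),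
    (∀ j k, j ≤ 2*t+1 → k ≤ 2*t+1 → j ≠ k → u j ≠ u k) →
    (∀ j, j ≤ 2*t+1 → u j ∉ S) →
    (∀ j, j < 2*t+1 → G.Adj (u j) (u (j+1))) →
    (∀ j k, k ≤ 2*t+1 → j + 2 ≤ k → ¬ G.Adj (u j) (u k)) →
    (∀ x ∈ S, (G.Adj (u 0) x ↔ x ∈ A)) →
    (1 < 2*t+1 → ((∀ x ∈ S, ¬ G.Adj (u 1) x) ∨ (∀ x ∈ S, (G.Adj (u 1) x ↔ x ∈ A)))) →
    (∀ j, 2 ≤ j → j < 2*t+1 → ∀ x ∈ S, ¬ G.Adj (u j) x) →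
    (∀ x ∈ S, (G.Adj (u (2*t+1)) x ↔ x ∈ B)) →
    ∃ l : List (V × V), ValidPivots G l ∧
      ∀ x ∈ S, ∀ y ∈ S, ((pivotSeq G l).Adj x y ↔
        Xor' (G.Adj x y) (Xor' (x ∈ A ∧ y ∈ B) (x ∈ B ∧ y ∈ A))) := by
  intro t
  induction t with
  | zero =>
    intro G u hinj hS hadj hnadj h0 h1 hmid hB
    refine ⟨[(u 0, u 1)], ⟨hadj 0 (by norm_num), trivial⟩, ?_⟩
    intro x hx y hy
    have hx0 : x ≠ u 0 := fun h => hS 0 (by norm_num) (h ▸ hx)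
    have hx1 : x ≠ u 1 := fun h => hS 1 (by norm_num) (h ▸ hx)
    have hy0 : y ≠ u 0 := fun h => hS 0 (by norm_num) (h ▸ hy)
    have hy1 : y ≠ u 1 := fun h => hS 1 (by norm_num) (h ▸ hy)
    have : pivotSeq G [(u 0, u 1)] = pivot G (u 0) (u 1) := rfl
    rw [this, pivot_adj_other (hadj 0 (by norm_num)) hx0 hx1 hy0 hy1]
    have e0x := h0 x hx
    have e0y := h0 y hy
    have e1x := hB x hx
    have e1y := hB y hy
    norm_num at e1x e1y
    rw [e0x, e0y, e1x, e1y]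
  | succ t IH =>
    intro G u hinj hS hadj hnadj h0 h1 hmid hB
    have adj01 : G.Adj (u 0) (u 1) := hadj 0 (by omega)
    set G' := pivot G (u 0) (u 1) with hG'
    have hpair : ∀ z w : V, z ≠ u 0 → z ≠ u 1 → w ≠ u 0 → w ≠ u 1 →
        (G'.Adj z w ↔ Xor' (G.Adj z w)
          (Xor' (G.Adj (u 0) z ∧ G.Adj (u 1) w) (G.Adj (u 1) z ∧ G.Adj (u 0) w))) :=
      fun z w h1' h2' h3' h4' => pivot_adj_other adj01 h1' h2' h3' h4'
    -- distinctness of u j from u 0, u 1 for j ≥ 2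
    have hneu : ∀ j, 2 ≤ j → j ≤ 2*(t+1)+1 → u j ≠ u 0 ∧ u j ≠ u 1 := by
      intro j h2j hj
      exact ⟨hinj j 0 hj (by omega) (by omega), hinj j 1 hj (by omega) (by omega)⟩
    have hxne : ∀ x ∈ S, x ≠ u 0 ∧ x ≠ u 1 := by
      intro x hx
      exact ⟨fun h => hS 0 (by omega) (h ▸ hx), fun h => hS 1 (by omega) (h ▸ hx)⟩
    -- G' agrees with G on S
    have hSagree : ∀ x ∈ S, ∀ y ∈ S, (G'.Adj x y ↔ G.Adj x y) := by
      intro x hx y hy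
      obtain ⟨hx0, hx1⟩ := hxne x hx
      obtain ⟨hy0, hy1⟩ := hxne y hy
      rw [hpair x y hx0 hx1 hy0 hy1]
      have e0x := h0 x hx
      have e0y := h0 y hy
      rcases h1 (by omega) with hc | hc
      · have n1x := hc x hx
        have n1y := hc y hy
        simp only [Xor', Xor]
        tauto
      · have n1x := hc x hx
        have n1y := hc y hy
        rw [e0x, e0y, n1x, n1y]
        simp only [Xor', Xor]
        tauto
    have Hadj : ∀ j, j < 2*t+1 → G'.Adj (u (j+2)) (u (j+2+1)) := by
      intro j hj
      obtain ⟨ha0, ha1⟩ := hneu (j+2) (by omega) (by omega)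
      obtain ⟨hb0, hb1⟩ := hneu (j+3) (by omega) (by omega)
      rw [show j+2+1 = j+3 from rfl, hpair _ _ ha0 ha1 hb0 hb1]
      have n1 : ¬ G.Adj (u 0) (u (j+2)) := hnadj 0 (j+2) (by omega) (by omega)
      have n2 : ¬ G.Adj (u 0) (u (j+3)) := hnadj 0 (j+3) (by omega) (by omega)
      have n3 : ¬ G.Adj (u 1) (u (j+3)) := hnadj 1 (j+3) (by omega) (by omega)
      have a1 : G.Adj (u (j+2)) (u (j+3)) := hadj (j+2) (by omega)
      simp [Xor', n1, n2, n3, a1]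
    have Hnadj : ∀ j k, k ≤ 2*t+1 → j + 2 ≤ k → ¬ G'.Adj (u (j+2)) (u (k+2)) := by
      intro j k hk hjk
      obtain ⟨ha0, ha1⟩ := hneu (j+2) (by omega) (by omega)
      obtain ⟨hb0, hb1⟩ := hneu (k+2) (by omega) (by omega)
      rw [hpair _ _ ha0 ha1 hb0 hb1]
      have n1 : ¬ G.Adj (u 0) (u (j+2)) := hnadj 0 (j+2) (by omega) (by omega)
      have n2 : ¬ G.Adj (u 0) (u (k+2)) := hnadj 0 (k+2) (by omega) (by omega)
      have n3 : ¬ G.Adj (u (j+2)) (u (k+2)) := hnadj (j+2) (k+2) (by omega) (by omega)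
      simp [Xor', n1, n2, n3]
    have H0 : ∀ x ∈ S, (G'.Adj (u 2) x ↔ x ∈ A) := by
      intro x hx
      obtain ⟨ha0, ha1⟩ := hneu 2 (by omega) (by omega)
      obtain ⟨hx0, hx1⟩ := hxne x hx
      rw [hpair _ _ ha0 ha1 hx0 hx1]
      have n1 : ¬ G.Adj (u 0) (u 2) := hnadj 0 2 (by omega) (by omega)
      have a1 : G.Adj (u 1) (u 2) := hadj 1 (by omega)
      have n2 : ¬ G.Adj (u 2) x := hmid 2 (by omega) (by omega) x hx
      have e0x := h0 x hx
      rw [e0x]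
      simp [Xor', n1, a1, n2]
    have H1 : (1 < 2*t+1 → ((∀ x ∈ S, ¬ G'.Adj (u 3) x) ∨ (∀ x ∈ S, (G'.Adj (u 3) x ↔ x ∈ A)))) := by
      intro ht
      left
      intro x hx
      obtain ⟨ha0, ha1⟩ := hneu 3 (by omega) (by omega)
      obtain ⟨hx0, hx1⟩ := hxne x hx
      rw [hpair _ _ ha0 ha1 hx0 hx1]
      have n1 : ¬ G.Adj (u 0) (u 3) := hnadj 0 3 (by omega) (by omega)
      have n2 : ¬ G.Adj (u 1) (u 3) := hnadj 1 3 (by omega) (by omega)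
      have n3 : ¬ G.Adj (u 3) x := hmid 3 (by omega) (by omega) x hx
      simp [Xor', n1, n2, n3]
    have Hmid : ∀ j, 2 ≤ j → j < 2*t+1 → ∀ x ∈ S, ¬ G'.Adj (u (j+2)) x := by
      intro j h2j hj x hx
      obtain ⟨ha0, ha1⟩ := hneu (j+2) (by omega) (by omega)
      obtain ⟨hx0, hx1⟩ := hxne x hx
      rw [hpair _ _ ha0 ha1 hx0 hx1]
      have n1 : ¬ G.Adj (u 0) (u (j+2)) := hnadj 0 (j+2) (by omega) (by omega)
      have n2 : ¬ G.Adj (u 1) (u (j+2)) := hnadj 1 (j+2) (by omega) (by omega)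
      have n3 : ¬ G.Adj (u (j+2)) x := hmid (j+2) (by omega) (by omega) x hx
      simp [Xor', n1, n2, n3]
    have HB : ∀ x ∈ S, (G'.Adj (u (2*t+1+2)) x ↔ x ∈ B) := by
      intro x hx
      have hMeq : 2*t+1+2 = 2*(t+1)+1 := by omega
      obtain ⟨ha0, ha1⟩ := hneu (2*t+1+2) (by omega) (by omega)
      obtain ⟨hx0, hx1⟩ := hxne x hx
      rw [hpair _ _ ha0 ha1 hx0 hx1]
      have n1 : ¬ G.Adj (u 0) (u (2*t+1+2)) := hnadj 0 (2*t+1+2) (by omega) (by omega)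
      have n2 : ¬ G.Adj (u 1) (u (2*t+1+2)) := hnadj 1 (2*t+1+2) (by omega) (by omega)
      have eBx := hB x hx
      rw [hMeq] at n1 n2 ⊢
      rw [eBx]
      simp [Xor', Xor, n1, n2]
    obtain ⟨l, hval, hfin⟩ := IH G' (fun j => u (j+2))
      (fun j k hj hk hjk => hinj (j+2) (k+2) (by omega) (by omega) (by omega))
      (fun j hj => hS (j+2) (by omega))
      Hadj Hnadj H0 H1 Hmid HB
    refine ⟨(u 0, u 1) :: l, ⟨adj01, hval⟩, ?_⟩
    intro x hx y hy
    have hps : pivotSeq G ((u 0, u 1) :: l) = pivotSeq G' l := rfl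
    rw [hps, hfin x hx y hy]
    simp only [hSagree x hx y hy]



/-! ### blockOf and collFlip lemmas -/

lemma blockOf_self_mem {V : Type u} (P : Set (Set V)) (v : V) : v ∈ blockOf P v := by
  unfold blockOf
  split
  · next h => exact h.choose_spec.2
  · exact Set.mem_singleton v

lemma blockOf_eq_of_mem {V : Type u} {P : Set (Set V)} (hdisj : P.PairwiseDisjoint id)
    {X : Set V} (hX : X ∈ P) {v : V} (hv : v ∈ X) : blockOf P v = X := by
  have hex : ∃ Y ∈ P, v ∈ Y := ⟨X, hX, hv⟩
  unfold blockOf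
  rw [dif_pos hex]
  have h1 := hex.choose_spec.1
  have h2 := hex.choose_spec.2
  by_contra hne
  have hd := hdisj h1 hX hne
  exact (Set.not_disjoint_iff.2 ⟨v, h2, hv⟩) hd

lemma mem_sUnion_of_blockOf_mem {V : Type u} {P : Set (Set V)} {v : V}
    (h : blockOf P v ∈ P) : v ∈ ⋃₀ P := ⟨blockOf P v, h, blockOf_self_mem P v⟩

lemma collFlip_adj {V : Type u} (H : SimpleGraph V) (P : Set (Set V))
    (F : Set (Set V × Set V)) (hsym : SymmRelSet F) (x y : V) :
    (collFlip H P F).Adj x y ↔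
      x ≠ y ∧ Xor' (H.Adj x y) ((blockOf P x, blockOf P y) ∈ F) := by
  show x ≠ y ∧ Xor' _ _ ↔ _
  have : ((blockOf P x, blockOf P y) ∈ F ∨ (blockOf P y, blockOf P x) ∈ F) ↔
      (blockOf P x, blockOf P y) ∈ F := ⟨fun h => h.elim id (fun h' => hsym _ _ h'), Or.inl⟩
  rw [this]

/-! ### Walk lemmas -/

lemma getVert_inj_of_isPath {V : Type u} {G : SimpleGraph V} {a b : V} {w : G.Walk a b}
    (hw : w.IsPath) : ∀ i ≤ w.length, ∀ j ≤ w.length, w.getVert i = w.getVert j → i = j := by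
  induction w with
  | nil =>
    intro i hi j hj _
    simp only [SimpleGraph.Walk.length_nil, Nat.le_zero] at hi hj
    omega
  | @cons a c b hadj q ih =>
    rw [SimpleGraph.Walk.cons_isPath_iff] at hw
    intro i hi j hj heq
    match i, j with
    | 0, 0 => rfl
    | 0, j'+1 =>
      exfalso
      apply hw.2
      rw [SimpleGraph.Walk.mem_support_iff_exists_getVert]
      refine ⟨j', ?_, ?_⟩
      · have : (SimpleGraph.Walk.cons hadj q).getVert (j'+1) = q.getVert j' := rfl
        rw [← this, ← heq]
        rfl
      · simpa using hj
    | i'+1, 0 =>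
      exfalso
      apply hw.2
      rw [SimpleGraph.Walk.mem_support_iff_exists_getVert]
      refine ⟨i', ?_, ?_⟩
      · have : (SimpleGraph.Walk.cons hadj q).getVert (i'+1) = q.getVert i' := rfl
        rw [← this, heq]
        rfl
      · simpa using hi
    | i'+1, j'+1 =>
      have := ih hw.1 i' (by simpa using hi) j' (by simpa using hj) heq
      omega

lemma pathsGraph_adj {m n : ℕ} (x y : Fin m × Fin n) :
    (pathsGraph m n).Adj x y ↔ x.1 = y.1 ∧ (pathGraph n).Adj x.2 y.2 := Iff.rfl

lemma pathsGraph_mono {m n L : ℕ} (v : ℕ → Fin m × Fin n)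
    (hL : ∀ j < L, (pathsGraph m n).Adj (v j) (v (j+1)))
    (hinj : ∀ i ≤ L, ∀ j ≤ L, v i = v j → i = j) :
    ∀ j k, k ≤ L → j + 2 ≤ k → ¬ (pathsGraph m n).Adj (v j) (v k) := by
  have hrow : ∀ j ≤ L, (v j).1 = (v 0).1 := by
    intro j
    induction j with
    | zero => intro _; rfl
    | succ j ihj =>
      intro hj
      rw [← (hL j (by omega)).1]
      exact ihj (by omega)
  set c : ℕ → ℕ := fun j => ((v j).2 : ℕ) with hc
  have hcinj : ∀ i ≤ L, ∀ j ≤ L, c i = c j → i = j := by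
    intro i hi j hj hcij
    apply hinj i hi j hj
    apply Prod.ext
    · rw [hrow i hi, hrow j hj]
    · exact Fin.ext hcij
  have hstep : ∀ j < L, c (j+1) = c j + 1 ∨ c j = c (j+1) + 1 := by
    intro j hj
    have := (hL j hj).2
    rw [pathGraph_adj] at this
    simp only [hc]
    omega
  rcases Nat.eq_zero_or_pos L with hL0 | hLpos
  · intro j k hk hjk
    omega
  have key : (∀ j ≤ L, c j = c 0 + j) ∨ (∀ j ≤ L, c j + j = c 0) := by
    rcases hstep 0 hLpos with h1 | h1
    · left
      have hmono : ∀ j, j < L → c (j+1) = c j + 1 := by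
        intro j
        induction j using Nat.strong_induction_on with
        | _ j IH =>
          intro hj
          match j with
          | 0 => simpa using h1
          | j'+1 =>
            have hprev : c (j'+1) = c j' + 1 := IH j' (by omega) (by omega)
            rcases hstep (j'+1) hj with h | h
            · exact h
            · exfalso
              have hcc : c (j'+1+1) = c j' := by omega
              have := hcinj (j'+1+1) (by omega) j' (by omega) hcc
              omega
      intro j
      induction j with
      | zero => intro _; omega
      | succ j ihj => intro hj; have := hmono j (by omega); have := ihj (by omega); omega
    · right
      have hmono : ∀ j, j < L → c j = c (j+1) + 1 := by
        intro j
        induction j using Nat.strong_induction_on with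
        | _ j IH =>
          intro hj
          match j with
          | 0 => simpa using h1
          | j'+1 =>
            have hprev : c j' = c (j'+1) + 1 := IH j' (by omega) (by omega)
            rcases hstep (j'+1) hj with h | h
            · exfalso
              have hcc : c (j'+1+1) = c j' := by omega
              have := hcinj (j'+1+1) (by omega) j' (by omega) hcc
              omega
            · exact h
      intro j
      induction j with
      | zero => intro _; omega
      | succ j ihj => intro hj; have := hmono j (by omega); have := ihj (by omega); omega
  intro j k hk hjk hadj
  have h2 := hadj.2
  rw [pathGraph_adj] at h2
  rcases key with hkey | hkey
  · have e1 := hkey j (by omega)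
    have e2 := hkey k (by omega)
    show False
    simp only [hc] at e1 e2
    rcases h2 with h | h <;> omega
  · have e1 := hkey j (by omega)
    have e2 := hkey k (by omega)
    show False
    simp only [hc] at e1 e2
    rcases h2 with h | h <;> omega


lemma bridge_helper {α : Type u} (Fr : α → α → Prop) (X X' Y Z : α)
    (hsymm : ∀ a b, Fr a b ↔ Fr b a)
    (hXF : Fr X X) (hX'F : Fr X' X') (hXX'F : ¬ Fr X X')
    (rY rZ : α)
    (hrY : ((Y = X ∨ Y = X') ∧ rY = X) ∨ (Y ≠ X ∧ Y ≠ X' ∧ rY = Y))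
    (hrZ : ((Z = X ∨ Z = X') ∧ rZ = X) ∨ (Z ≠ X ∧ Z ≠ X' ∧ rZ = Z)) :
    (Xor' (Fr rY rZ) (Xor' (Fr X rY ∧ Fr X' rZ) (Fr X' rY ∧ Fr X rZ)) ↔
     Xor' (Fr Y Z) (Xor' (Fr X Y ∧ Fr X' Z) (Fr X' Y ∧ Fr X Z))) := by
  have hX'XF : ¬ Fr X' X := fun h => hXX'F ((hsymm X X').2 h)
  have h1 := hsymm Z X
  have h2 := hsymm Z X'
  have h3 := hsymm Y X
  have h4 := hsymm Y X'
  clear hsymm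
  rcases hrY with ⟨hY, rfl⟩ | ⟨hY1, hY2, rfl⟩ <;> rcases hrZ with ⟨hZ, rfl⟩ | ⟨hZ1, hZ2, rfl⟩
  · rcases hY with rfl | rfl <;> rcases hZ with h | h <;> (try subst h) <;>
      (unfold Xor' Xor; tauto)
  · rcases hY with rfl | rfl <;> (unfold Xor' Xor; tauto)
  · rcases hZ with rfl | rfl <;> (unfold Xor' Xor; tauto)
  · rfl

lemma xor_symm_helper {a b p1 p2 q1 q2 : Prop} (hab : a ↔ b)
    (h : Xor' a (Xor' (p1 ∧ q2) (q1 ∧ p2))) : Xor' b (Xor' (p2 ∧ q1) (q2 ∧ p1)) := by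
  unfold Xor' Xor at *
  tauto

lemma main_helper {n1 H f a b c d : Prop} (hn1 : n1) :
    (Xor' (n1 ∧ Xor' H f) (Xor' (a ∧ b) (c ∧ d)) ↔
      (n1 ∧ Xor' H (Xor' f (Xor' (a ∧ b) (c ∧ d))))) := by
  unfold Xor' Xor
  tauto

lemma main_helper2 {n1 x y A B : Prop} (hn1 : ¬ n1) :
    (Xor' (n1 ∧ x) (Xor' (A ∧ B) (B ∧ A)) ↔ (n1 ∧ y)) := by
  unfold Xor' Xor
  tauto

/-! ## Statement 11 -/
theorem stmt11 (m n : ℕ) (hm : 1 ≤ m) (hn : 1 ≤ n) (k : ℕ) (hk : 2 ≤ k)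
    (P : Set (Set (Fin (m + 2) × Fin n))) (hP : IsCoarsening P (columnSet (m + 2) n))
    (hPk : P.ncard = k)
    (F : Set (Set (Fin (m + 2) × Fin n) × Set (Fin (m + 2) × Fin n)))
    (hFP : F ⊆ P ×ˢ P) (hFsymm : SymmRelSet F)
    (X X' : Set (Fin (m + 2) × Fin n)) (hX : X ∈ P) (hX' : X' ∈ P) (hXX' : X ≠ X')
    (hXF : (X, X) ∈ F) (hX'F : (X', X') ∈ F) (hXX'F : (X, X') ∉ F)
    (hpath : ∃ (p q : Fin (m + 2) × Fin n)
        (w : (collFlip (pathsGraph (m + 2) n) P F).Walk p q),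
        w.IsPath ∧ p ∈ X ∧ q ∈ X' ∧
        ∀ z ∈ w.support, z ≠ p → z ≠ q → z ∉ ⋃₀ P) :
    ∃ G' : SimpleGraph (Fin m × Fin n), IsKFlippedPaths (k - 1) m n G' ∧
      IsPivotMinorOf G' (collFlip (pathsGraph (m + 2) n) P F) := by
  classical
  have hdisj : P.PairwiseDisjoint id := hP.1.2
  set G := collFlip (pathsGraph (m + 2) n) P F with hGdef
  obtain ⟨p, q, w, hw, hpX, hqX', hint⟩ := hpath
  have hbp : blockOf P p = X := blockOf_eq_of_mem hdisj hX hpX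
  have hbq : blockOf P q = X' := blockOf_eq_of_mem hdisj hX' hqX'
  have hX'X'F : (X', X) ∉ F := fun h => hXX'F (hFsymm _ _ h)
  have hpq : p ≠ q := by
    intro h
    exact (Set.not_disjoint_iff.2 ⟨p, hpX, h ▸ hqX'⟩) (hdisj hX hX' hXX')
  set L := w.length with hLdef
  have hL1 : 1 ≤ L := by
    rcases Nat.eq_zero_or_pos L with h0 | h1
    · exact absurd (w.eq_of_length_eq_zero h0) hpq
    · exact h1
  set v : ℕ → Fin (m + 2) × Fin n := fun j => w.getVert j with hvdef
  have hv0 : v 0 = p := w.getVert_zero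
  have hvL : v L = q := w.getVert_length
  have hinjv : ∀ i ≤ L, ∀ j ≤ L, v i = v j → i = j := fun i hi j hj h =>
    getVert_inj_of_isPath hw i hi j hj h
  have hGadj : ∀ j < L, G.Adj (v j) (v (j+1)) := fun j hj => w.adj_getVert_succ hj
  have hfree : ∀ j, 0 < j → j < L → v j ∉ ⋃₀ P := by
    intro j h0 hjL
    apply hint (v j)
    · rw [SimpleGraph.Walk.mem_support_iff_exists_getVert]
      exact ⟨j, rfl, le_of_lt hjL⟩
    · intro he
      have := hinjv j (le_of_lt hjL) 0 (by omega) (he.trans hv0.symm)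
      omega
    · intro he
      have := hinjv j (le_of_lt hjL) L (le_refl L) (he.trans hvL.symm)
      omega
  have hbitfree : ∀ z z' : Fin (m + 2) × Fin n, z ∉ ⋃₀ P →
      ¬ ((blockOf P z, blockOf P z') ∈ F) ∧ ¬ ((blockOf P z', blockOf P z) ∈ F) := by
    intro z z' hz
    constructor
    · intro hFm
      exact hz (mem_sUnion_of_blockOf_mem (Set.mem_prod.1 (hFP hFm)).1)
    · intro hFm
      exact hz (mem_sUnion_of_blockOf_mem (Set.mem_prod.1 (hFP hFm)).2)
  have hGadj_iff : ∀ z z' : Fin (m + 2) × Fin n, G.Adj z z' ↔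
      (z ≠ z' ∧ Xor' ((pathsGraph (m + 2) n).Adj z z') ((blockOf P z, blockOf P z') ∈ F)) :=
    fun z z' => collFlip_adj _ P F hFsymm z z'
  have hHadj : ∀ j < L, (pathsGraph (m + 2) n).Adj (v j) (v (j+1)) := by
    intro j hj
    have hg := hGadj j hj
    rw [hGadj_iff] at hg
    obtain ⟨hne, hx⟩ := hg
    have hbit : ¬ ((blockOf P (v j), blockOf P (v (j+1))) ∈ F) := by
      by_cases h0 : j = 0
      · subst h0
        by_cases h1 : 1 = L
        · have hq1 : v 1 = q := by rw [show (1:ℕ) = L from h1, hvL]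
          rw [hv0, hq1, hbp, hbq]
          exact hXX'F
        · exact (hbitfree (v 1) (v 0) (hfree 1 one_pos (by omega))).2
      · exact (hbitfree (v j) (v (j+1)) (hfree j (by omega) hj)).1
    rcases hx with ⟨h, _⟩ | ⟨h, _⟩
    · exact h
    · exact absurd h hbit
  have hHnadj := pathsGraph_mono v hHadj hinjv
  have hrowv : ∀ j ≤ L, (v j).1 = p.1 := by
    intro j
    induction j with
    | zero => intro _; rw [hv0]
    | succ j ihj =>
      intro hj
      rw [← (hHadj j (by omega)).1]
      exact ihj (by omega)
  have hGnadj : ∀ j k, k ≤ L → j + 2 ≤ k → ¬ G.Adj (v j) (v k) := by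
    intro j k hk hjk hadj
    rw [hGadj_iff] at hadj
    obtain ⟨hne, hx⟩ := hadj
    have hH := hHnadj j k hk hjk
    have hbit : ¬ ((blockOf P (v j), blockOf P (v k)) ∈ F) := by
      by_cases h0 : j = 0
      · subst h0
        by_cases h1 : k = L
        · subst h1
          rw [hv0, hvL, hbp, hbq]
          exact hXX'F
        · exact (hbitfree (v k) (v 0) (hfree k (by omega) (by omega))).2
      · exact (hbitfree (v j) (v k) (hfree j (by omega) (by omega))).1
    rcases hx with ⟨h, _⟩ | ⟨h, _⟩
    · exact hH h
    · exact hbit h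
  -- rows to delete
  set i : Fin (m + 2) := p.1 with hidef
  set i' : Fin (m + 2) := if (i : ℕ) = 0 then (1 : Fin (m + 2)) else (0 : Fin (m + 2)) with hi'def
  have hii' : i' ≠ i := by
    rw [hi'def]
    split
    · next h => intro hc; rw [← hc] at h; simp at h
    · next h => intro hc; rw [← hc] at h; simp at h
  set S : Set (Fin (m + 2) × Fin n) := {x | x.1 ≠ i ∧ x.1 ≠ i'} with hSdef
  set A : Set (Fin (m + 2) × Fin n) := {x | x ∈ S ∧ (X, blockOf P x) ∈ F} with hAdef
  set B : Set (Fin (m + 2) × Fin n) := {x | x ∈ S ∧ (X', blockOf P x) ∈ F} with hBdef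
  have hrownadj : ∀ z x : Fin (m + 2) × Fin n, z.1 ≠ x.1 →
      ¬ (pathsGraph (m + 2) n).Adj z x := fun z x h hadj => h hadj.1
  have hrowS : ∀ z : Fin (m + 2) × Fin n, (z.1 = i ∨ z.1 = i') → ∀ x ∈ S, z.1 ≠ x.1 := by
    intro z hz x hx
    rcases hz with h | h <;> rw [h]
    · exact fun hc => hx.1 hc.symm
    · exact fun hc => hx.2 hc.symm
  have hprofX : ∀ z : Fin (m + 2) × Fin n, z ∈ X → (z.1 = i ∨ z.1 = i') →
      ∀ x ∈ S, (G.Adj z x ↔ x ∈ A) := by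
    intro z hz hzr x hx
    have hnrow : z.1 ≠ x.1 := hrowS z hzr x hx
    have hne : z ≠ x := fun h => hnrow (by rw [h])
    have hH := hrownadj z x hnrow
    rw [hGadj_iff, blockOf_eq_of_mem hdisj hX hz]
    constructor
    · rintro ⟨-, hxor⟩
      rcases hxor with ⟨h, -⟩ | ⟨h, -⟩
      · exact absurd h hH
      · exact ⟨hx, h⟩
    · intro hxa
      exact ⟨hne, Or.inr ⟨hxa.2, hH⟩⟩
  have hprofX' : ∀ z : Fin (m + 2) × Fin n, z ∈ X' → (z.1 = i ∨ z.1 = i') →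
      ∀ x ∈ S, (G.Adj z x ↔ x ∈ B) := by
    intro z hz hzr x hx
    have hnrow : z.1 ≠ x.1 := hrowS z hzr x hx
    have hne : z ≠ x := fun h => hnrow (by rw [h])
    have hH := hrownadj z x hnrow
    rw [hGadj_iff, blockOf_eq_of_mem hdisj hX' hz]
    constructor
    · rintro ⟨-, hxor⟩
      rcases hxor with ⟨h, -⟩ | ⟨h, -⟩
      · exact absurd h hH
      · exact ⟨hx, h⟩
    · intro hxa
      exact ⟨hne, Or.inr ⟨hxa.2, hH⟩⟩
  have hproffree : ∀ z : Fin (m + 2) × Fin n, z ∉ ⋃₀ P → (z.1 = i ∨ z.1 = i') →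
      ∀ x ∈ S, ¬ G.Adj z x := by
    intro z hz hzr x hx hadj
    rw [hGadj_iff] at hadj
    rcases hadj.2 with ⟨h, -⟩ | ⟨h, -⟩
    · exact hrownadj z x (hrowS z hzr x hx) h
    · exact (hbitfree z x hz).1 h
  have hvnotS : ∀ j ≤ L, v j ∉ S := by
    intro j hj hmem
    exact hmem.1 (hrowv j hj)
  -- the pivot sequence
  obtain ⟨l, hval, hform⟩ : ∃ l : List ((Fin (m + 2) × Fin n) × (Fin (m + 2) × Fin n)),
      ValidPivots G l ∧ ∀ x ∈ S, ∀ y ∈ S, ((pivotSeq G l).Adj x y ↔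
        Xor' (G.Adj x y) (Xor' (x ∈ A ∧ y ∈ B) (x ∈ B ∧ y ∈ A))) := by
    rcases Nat.even_or_odd L with hEv | hOdd
    · -- even case : prepend p' = (i', p.2)
      obtain ⟨t, ht⟩ := hEv
      have hLt : L = 2 * t := by omega
      have ht1 : 1 ≤ t := by omega
      set p' : Fin (m + 2) × Fin n := (i', p.2) with hp'def
      have hp'X : p' ∈ X := by
        have hcol : ∀ r : Fin (m + 2), (r, p.2) ∈ X := by
          intro r
          obtain ⟨C, hC, hXeq⟩ := hP.2 X hX
          rw [hXeq] at hpX ⊢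
          obtain ⟨c, hcC, hzc⟩ := hpX
          obtain ⟨jcol, rfl⟩ := hC hcC
          exact ⟨_, hcC, hzc⟩
        exact hcol i'
      have hbp' : blockOf P p' = X := blockOf_eq_of_mem hdisj hX hp'X
      have hp'row : p'.1 = i' := rfl
      have hp'nv : ∀ j ≤ L, p' ≠ v j := by
        intro j hj hc
        have h1 : (v j).1 = i := hrowv j hj
        rw [← hc] at h1
        rw [hp'row] at h1
        exact hii' h1
      have hp'adj : G.Adj p' p := by
        have hne : p' ≠ p := by
          have h := hp'nv 0 (by omega)
          rwa [hv0] at h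
        have hnrow : p'.1 ≠ p.1 := by rw [hp'row, ← hidef]; exact hii'
        rw [hGadj_iff, hbp', hbp]
        exact ⟨hne, Or.inr ⟨hXF, hrownadj p' p hnrow⟩⟩
      have hp'nadj : ∀ j, 1 ≤ j → j ≤ L → ¬ G.Adj p' (v j) := by
        intro j h1 hj hadj
        rw [hGadj_iff] at hadj
        rcases hadj.2 with ⟨h, -⟩ | ⟨h, -⟩
        · exact hrownadj p' (v j) (by rw [hp'row, hrowv j hj]; exact hii') h
        · by_cases hjL : j = L
          · subst hjL
            rw [hvL, hbp', hbq] at h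
            exact hXX'F h
          · exact (hbitfree (v j) p' (hfree j (by omega) (by omega))).2 h
      set u : ℕ → Fin (m + 2) × Fin n := fun j => match j with
        | 0 => p'
        | j'+1 => v j' with hudef
      have hu0 : u 0 = p' := rfl
      have hus : ∀ j, u (j+1) = v j := fun j => rfl
      apply core S A B t G u
      · intro j k hj hk hjk
        match j, k with
        | 0, 0 => omega
        | 0, k'+1 => exact fun he => hp'nv k' (by omega) he
        | j'+1, 0 => exact fun he => hp'nv j' (by omega) he.symm
        | j'+1, k'+1 =>
          intro he
          have := hinjv j' (by omega) k' (by omega) he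
          omega
      · intro j hj
        match j with
        | 0 => exact fun hmem => hmem.2 hp'row
        | j'+1 => exact hvnotS j' (by omega)
      · intro j hj
        match j with
        | 0 =>
          rw [hu0, hus, hv0]
          exact hp'adj
        | j'+1 => exact hGadj j' (by omega)
      · intro j k hk h2
        match j, k with
        | 0, k'+1 => exact hp'nadj k' (by omega) (by omega)
        | j'+1, k'+1 => exact hGnadj j' k' (by omega) (by omega)
      · intro x hx
        rw [hu0]
        exact hprofX p' hp'X (Or.inr hp'row) x hx
      · intro hM
        right
        intro x hx
        rw [hus, hv0]
        exact hprofX p hpX (Or.inl rfl) x hx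
      · intro j h2 hjM x hx
        match j, h2 with
        | j'+1, _ =>
          rw [hus]
          exact hproffree (v j') (hfree j' (by omega) (by omega))
            (Or.inl (hrowv j' (by omega))) x hx
      · intro x hx
        have : u (2*t+1) = v L := by rw [hus, hLt]
        rw [this, hvL]
        exact hprofX' q hqX' (Or.inl (by rw [← hvL]; exact hrowv L (le_refl L))) x hx
    · -- odd case : use v directly
      obtain ⟨t, ht⟩ := hOdd
      apply core S A B t G v
      · intro j k hj hk hjk he
        exact hjk (hinjv j (by omega) k (by omega) he)
      · intro j hj
        exact hvnotS j (by omega)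
      · intro j hj
        exact hGadj j (by omega)
      · intro j k hk h2
        exact hGnadj j k (by omega) h2
      · intro x hx
        rw [hv0]
        exact hprofX p hpX (Or.inl rfl) x hx
      · intro hM
        left
        intro x hx
        exact hproffree (v 1) (hfree 1 (by omega) (by omega)) (Or.inl (hrowv 1 (by omega))) x hx
      · intro j h2 hjM x hx
        exact hproffree (v j) (hfree j (by omega) (by omega)) (Or.inl (hrowv j (by omega))) x hx
      · intro x hx
        have : v (2*t+1) = q := by rw [← ht, hvL]
        rw [this]
        exact hprofX' q hqX' (Or.inl (by rw [← hvL]; exact hrowv L (le_refl L))) x hx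
  -- ### Stage 2: construct the small flipped graph
  -- the row equivalence
  have hcard : Fintype.card {r : Fin (m + 2) // r ≠ i ∧ r ≠ i'} = m := by
    rw [Fintype.card_subtype]
    have hfe : Finset.filter (fun r : Fin (m + 2) => r ≠ i ∧ r ≠ i') Finset.univ =
        Finset.univ \ {i, i'} := by
      ext r
      simp [not_or]
    rw [hfe, Finset.card_sdiff_of_subset (by simp)]
    rw [Finset.card_univ, Fintype.card_fin]
    have h2 : ({i, i'} : Finset (Fin (m + 2))).card = 2 := by
      rw [Finset.card_insert_of_notMem (by simp [Ne.symm hii'])]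
      simp
    rw [h2]
    omega
  have ρ : Fin m ≃ {r : Fin (m + 2) // r ≠ i ∧ r ≠ i'} :=
    (Fintype.equivFinOfCardEq hcard).symm
  set emb : Fin m × Fin n → Fin (m + 2) × Fin n :=
    fun z => (((ρ z.1 : {r : Fin (m + 2) // r ≠ i ∧ r ≠ i'}) : Fin (m + 2)), z.2) with hembdef
  have hembS : ∀ z, emb z ∈ S := fun z => (ρ z.1).2
  have hembinj : Function.Injective emb := by
    intro a b h
    have h1 : ((ρ a.1 : {r : Fin (m + 2) // r ≠ i ∧ r ≠ i'}) : Fin (m + 2)) =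
        ((ρ b.1 : {r : Fin (m + 2) // r ≠ i ∧ r ≠ i'}) : Fin (m + 2)) := (Prod.ext_iff.1 h).1
    have h2 : a.2 = b.2 := (Prod.ext_iff.1 h).2
    have h3 : a.1 = b.1 := ρ.injective (Subtype.ext h1)
    exact Prod.ext h3 h2
  have hembH : ∀ z z' : Fin m × Fin n,
      ((pathsGraph m n).Adj z z' ↔ (pathsGraph (m + 2) n).Adj (emb z) (emb z')) := by
    intro z z'
    rw [pathsGraph_adj, pathsGraph_adj]
    apply and_congr_left'
    constructor
    · intro h
      show ((ρ z.1 : {r : Fin (m + 2) // r ≠ i ∧ r ≠ i'}) : Fin (m + 2)) =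
        ((ρ z'.1 : {r : Fin (m + 2) // r ≠ i ∧ r ≠ i'}) : Fin (m + 2))
      rw [h]
    · intro h; exact ρ.injective (Subtype.ext h)
  -- the merged collection
  set Wset : Set (Fin (m + 2) × Fin n) := X ∪ X' with hWdef
  set P1 : Set (Set (Fin (m + 2) × Fin n)) := insert Wset (P \ {X, X'}) with hP1def
  set pb : Set (Fin (m + 2) × Fin n) → Set (Fin m × Fin n) := fun Y => emb ⁻¹' Y with hpbdef
  set P2 : Set (Set (Fin m × Fin n)) := pb '' P1 with hP2def
  set rep : Set (Fin (m + 2) × Fin n) → Set (Fin (m + 2) × Fin n) :=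
    fun Y => if Y = Wset then X else Y with hrepdef
  set nb : Set (Fin (m + 2) × Fin n) → Set (Fin (m + 2) × Fin n) → Prop :=
    fun Y Z => Xor' ((rep Y, rep Z) ∈ F)
      (Xor' ((X, rep Y) ∈ F ∧ (X', rep Z) ∈ F) ((X', rep Y) ∈ F ∧ (X, rep Z) ∈ F)) with hnbdef
  set F2 : Set (Set (Fin m × Fin n) × Set (Fin m × Fin n)) :=
    {qq | ∃ Y ∈ P1, ∃ Z ∈ P1, qq = (pb Y, pb Z) ∧ nb Y Z} with hF2def
  -- basic properties of P1
  have hmemP1 : ∀ Y, Y ∈ P1 ↔ (Y = Wset ∨ (Y ∈ P ∧ Y ≠ X ∧ Y ≠ X')) := by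
    intro Y
    rw [hP1def]
    constructor
    · intro h
      rcases h with h | h
      · exact Or.inl h
      · refine Or.inr ⟨h.1, ?_, ?_⟩
        · intro hc; exact h.2 (by rw [hc]; exact Set.mem_insert _ _)
        · intro hc; exact h.2 (by rw [hc]; right; rfl)
    · intro h
      rcases h with h | h
      · exact Or.inl h
      · refine Or.inr ⟨h.1, ?_⟩
        intro hc
        rcases hc with hc | hc
        · exact h.2.1 hc
        · exact h.2.2 hc
  have hP1cols : ∀ Y ∈ P1, ∃ C ⊆ columnSet (m + 2) n, Y = ⋃₀ C := by
    intro Y hY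
    rcases (hmemP1 Y).1 hY with rfl | hY'
    · obtain ⟨CX, hCX, hXeq⟩ := hP.2 X hX
      obtain ⟨CX', hCX', hX'eq⟩ := hP.2 X' hX'
      exact ⟨CX ∪ CX', Set.union_subset hCX hCX', by
        rw [hWdef, Set.sUnion_union, ← hXeq, ← hX'eq]⟩
    · exact hP.2 Y hY'.1
  have hP1colmem : ∀ Y ∈ P1, ∀ z ∈ Y, ∀ r : Fin (m + 2), (r, z.2) ∈ Y := by
    intro Y hY z hz r
    obtain ⟨C, hC, hYeq⟩ := hP1cols Y hY
    rw [hYeq] at hz ⊢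
    obtain ⟨c, hcC, hzc⟩ := hz
    obtain ⟨jcol, rfl⟩ := hC hcC
    exact ⟨_, hcC, hzc⟩
  have hP1ne : ∀ Y ∈ P1, Y.Nonempty := by
    intro Y hY
    rcases (hmemP1 Y).1 hY with rfl | hY'
    · obtain ⟨z, hz⟩ := hP.1.1 X hX
      exact ⟨z, Or.inl hz⟩
    · exact hP.1.1 Y hY'.1
  have hpbne : ∀ Y ∈ P1, (pb Y).Nonempty := by
    intro Y hY
    obtain ⟨z, hz⟩ := hP1ne Y hY
    refine ⟨(⟨0, by omega⟩, z.2), ?_⟩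
    show emb (⟨0, by omega⟩, z.2) ∈ Y
    exact hP1colmem Y hY z hz _
  have hP1sub : ∀ Y ∈ P1, Y ⊆ ⋃₀ P := by
    intro Y hY
    rcases (hmemP1 Y).1 hY with rfl | hY'
    · exact Set.union_subset (Set.subset_sUnion_of_mem hX) (Set.subset_sUnion_of_mem hX')
    · exact Set.subset_sUnion_of_mem hY'.1
  have hP1disj : P1.PairwiseDisjoint id := by
    intro Y hY Z hZ hne
    have hdXY : ∀ T, T ∈ P → T ≠ X → T ≠ X' → Disjoint Wset T := by
      intro T hT h1 h2
      rw [hWdef]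
      exact Set.disjoint_union_left.2 ⟨hdisj hX hT (Ne.symm h1), hdisj hX' hT (Ne.symm h2)⟩
    rcases (hmemP1 Y).1 hY with rfl | hY' <;> rcases (hmemP1 Z).1 hZ with rfl | hZ'
    · exact absurd rfl hne
    · exact hdXY Z hZ'.1 hZ'.2.1 hZ'.2.2
    · exact (hdXY Y hY'.1 hY'.2.1 hY'.2.2).symm
    · exact hdisj hY'.1 hZ'.1 hne
  have hP2disj : P2.PairwiseDisjoint id := by
    intro C hC D hD hne
    obtain ⟨Y, hY, rfl⟩ := hC
    obtain ⟨Z, hZ, rfl⟩ := hD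
    have hYZ : Y ≠ Z := fun h => hne (by rw [h])
    exact (hP1disj hY hZ hYZ).preimage emb
  have hpbinj : ∀ Y ∈ P1, ∀ Z ∈ P1, pb Y = pb Z → Y = Z := by
    intro Y hY Z hZ he
    by_contra hne
    obtain ⟨zz, hzz⟩ := hpbne Y hY
    have h2 : zz ∈ pb Z := he ▸ hzz
    exact (Set.not_disjoint_iff.2 ⟨emb zz, hzz, h2⟩) (hP1disj hY hZ hne)
  have hblock2 : ∀ zz : Fin m × Fin n, ∀ Y ∈ P1, emb zz ∈ Y → blockOf P2 zz = pb Y := by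
    intro zz Y hY hmem
    exact blockOf_eq_of_mem hP2disj ⟨Y, hY, rfl⟩ hmem
  have hF2iff : ∀ Y ∈ P1, ∀ Z ∈ P1, ((pb Y, pb Z) ∈ F2 ↔ nb Y Z) := by
    intro Y hY Z hZ
    constructor
    · rintro ⟨Y1, hY1, Z1, hZ1, heq, hnb⟩
      have e1 : pb Y = pb Y1 := (Prod.ext_iff.1 heq).1
      have e2 : pb Z = pb Z1 := (Prod.ext_iff.1 heq).2
      rw [hpbinj Y hY Y1 hY1 e1, hpbinj Z hZ Z1 hZ1 e2]
      exact hnb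
    · intro hnb
      exact ⟨Y, hY, Z, hZ, rfl, hnb⟩
  have hnoA : ∀ x : Fin (m + 2) × Fin n, x ∉ ⋃₀ P → x ∉ A ∧ x ∉ B := by
    intro x hx
    constructor
    · intro hxa
      exact hx (mem_sUnion_of_blockOf_mem (Set.mem_prod.1 (hFP hxa.2)).2)
    · intro hxb
      exact hx (mem_sUnion_of_blockOf_mem (Set.mem_prod.1 (hFP hxb.2)).2)
  have huncov : ∀ zz : Fin m × Fin n, emb zz ∉ ⋃₀ P →
      ∀ D : Set (Fin m × Fin n), (blockOf P2 zz, D) ∉ F2 ∧ (D, blockOf P2 zz) ∉ F2 := by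
    intro zz hzz D
    have hz2 : zz ∉ ⋃₀ P2 := by
      rintro ⟨C, ⟨Y, hY, rfl⟩, hzC⟩
      exact hzz (hP1sub Y hY hzC)
    have hb2 : blockOf P2 zz = {zz} := by
      unfold blockOf
      rw [dif_neg]
      rintro ⟨Y, hY, hzY⟩
      exact hz2 ⟨Y, hY, hzY⟩
    constructor
    · rintro ⟨Y1, hY1, Z1, hZ1, heq, -⟩
      have e1 : blockOf P2 zz = pb Y1 := (Prod.ext_iff.1 heq).1
      have : zz ∈ pb Y1 := e1 ▸ blockOf_self_mem P2 zz
      exact hzz (hP1sub Y1 hY1 this)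
    · rintro ⟨Y1, hY1, Z1, hZ1, heq, -⟩
      have e1 : blockOf P2 zz = pb Z1 := (Prod.ext_iff.1 heq).2
      have : zz ∈ pb Z1 := e1 ▸ blockOf_self_mem P2 zz
      exact hzz (hP1sub Z1 hZ1 this)
  -- the bridging bit identity
  have hWne : ∀ Y, Y ∈ P → Y ≠ X → Y ≠ X' → Y ≠ Wset := by
    intro Y hY h1 h2 hc
    obtain ⟨z, hz⟩ := hP.1.1 X hX
    have hzY : z ∈ Y := by rw [hc, hWdef]; exact Or.inl hz
    exact (Set.not_disjoint_iff.2 ⟨z, hz, hzY⟩) (hdisj hX hY (Ne.symm h1))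
  have hsymmF : ∀ a b : Set (Fin (m + 2) × Fin n), ((a, b) ∈ F ↔ (b, a) ∈ F) :=
    fun a b => ⟨hFsymm a b, hFsymm b a⟩
  have hbit2 : ∀ zz zz' : Fin m × Fin n,
      ((blockOf P2 zz, blockOf P2 zz') ∈ F2 ↔
        Xor' ((blockOf P (emb zz), blockOf P (emb zz')) ∈ F)
          (Xor' (emb zz ∈ A ∧ emb zz' ∈ B) (emb zz ∈ B ∧ emb zz' ∈ A))) := by
    intro zz zz'
    by_cases hcov : emb zz ∈ ⋃₀ P
    · by_cases hcov' : emb zz' ∈ ⋃₀ P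
      · -- both covered
        obtain ⟨Y, hYP, hzY⟩ := hcov
        obtain ⟨Z, hZP, hzZ⟩ := hcov'
        have hbY : blockOf P (emb zz) = Y := blockOf_eq_of_mem hdisj hYP hzY
        have hbZ : blockOf P (emb zz') = Z := blockOf_eq_of_mem hdisj hZP hzZ
        have hAzz : (emb zz ∈ A ↔ (X, Y) ∈ F) := by
          constructor
          · intro h; rw [← hbY]; exact h.2
          · intro h; exact ⟨hembS zz, by rw [hbY]; exact h⟩
        have hBzz : (emb zz ∈ B ↔ (X', Y) ∈ F) := by
          constructor
          · intro h; rw [← hbY]; exact h.2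
          · intro h; exact ⟨hembS zz, by rw [hbY]; exact h⟩
        have hAzz' : (emb zz' ∈ A ↔ (X, Z) ∈ F) := by
          constructor
          · intro h; rw [← hbZ]; exact h.2
          · intro h; exact ⟨hembS zz', by rw [hbZ]; exact h⟩
        have hBzz' : (emb zz' ∈ B ↔ (X', Z) ∈ F) := by
          constructor
          · intro h; rw [← hbZ]; exact h.2
          · intro h; exact ⟨hembS zz', by rw [hbZ]; exact h⟩
        -- merged blocks
        set mY : Set (Fin (m + 2) × Fin n) := if Y = X ∨ Y = X' then Wset else Y with hmYdef
        set mZ : Set (Fin (m + 2) × Fin n) := if Z = X ∨ Z = X' then Wset else Z with hmZdef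
        have hmYP1 : mY ∈ P1 := by
          rw [hmYdef]
          split
          · exact Set.mem_insert _ _
          · next h =>
            push_neg at h
            exact (hmemP1 Y).2 (Or.inr ⟨hYP, h.1, h.2⟩)
        have hmZP1 : mZ ∈ P1 := by
          rw [hmZdef]
          split
          · exact Set.mem_insert _ _
          · next h =>
            push_neg at h
            exact (hmemP1 Z).2 (Or.inr ⟨hZP, h.1, h.2⟩)
        have hzmY : emb zz ∈ mY := by
          rw [hmYdef]
          split
          · next h =>
            rcases h with h | h
            · exact Or.inl (h ▸ hzY)
            · exact Or.inr (h ▸ hzY)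
          · exact hzY
        have hzmZ : emb zz' ∈ mZ := by
          rw [hmZdef]
          split
          · next h =>
            rcases h with h | h
            · exact Or.inl (h ▸ hzZ)
            · exact Or.inr (h ▸ hzZ)
          · exact hzZ
        rw [hblock2 zz mY hmYP1 hzmY, hblock2 zz' mZ hmZP1 hzmZ,
          hF2iff mY hmYP1 mZ hmZP1, hbY, hbZ, hAzz, hBzz, hAzz', hBzz']
        have hrepY : rep mY = if Y = X ∨ Y = X' then X else Y := by
          by_cases hc : Y = X ∨ Y = X'
          · rw [hmYdef, if_pos hc, if_pos hc]
            simp only [hrepdef]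
            simp
          · rw [hmYdef, if_neg hc, if_neg hc]
            simp only [hrepdef]
            push_neg at hc
            rw [if_neg (hWne Y hYP hc.1 hc.2)]
        have hrepZ : rep mZ = if Z = X ∨ Z = X' then X else Z := by
          by_cases hc : Z = X ∨ Z = X'
          · rw [hmZdef, if_pos hc, if_pos hc]
            simp only [hrepdef]
            simp
          · rw [hmZdef, if_neg hc, if_neg hc]
            simp only [hrepdef]
            push_neg at hc
            rw [if_neg (hWne Z hZP hc.1 hc.2)]
        simp only [hnbdef]
        rw [hrepY, hrepZ]
        apply bridge_helper (fun a b => (a, b) ∈ F) X X' Y Z hsymmF hXF hX'F hXX'F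
        · by_cases hc : Y = X ∨ Y = X'
          · exact Or.inl ⟨hc, if_pos hc⟩
          · push_neg at hc
            exact Or.inr ⟨hc.1, hc.2, if_neg (by tauto)⟩
        · by_cases hc : Z = X ∨ Z = X'
          · exact Or.inl ⟨hc, if_pos hc⟩
          · push_neg at hc
            exact Or.inr ⟨hc.1, hc.2, if_neg (by tauto)⟩
      · -- zz' uncovered
        have h1 := huncov zz' hcov' (blockOf P2 zz)
        have h2 := hbitfree (emb zz') (emb zz) hcov'
        have h3 := hnoA (emb zz') hcov'
        constructor
        · intro h; exact absurd h h1.2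
        · intro h
          exfalso
          rcases h with ⟨h, -⟩ | ⟨h, -⟩
          · exact h2.2 h
          · rcases h with ⟨hh, -⟩ | ⟨hh, -⟩
            · exact h3.2 hh.2
            · exact h3.1 hh.2
    · -- zz uncovered
      have h1 := huncov zz hcov (blockOf P2 zz')
      have h2 := hbitfree (emb zz) (emb zz') hcov
      have h3 := hnoA (emb zz) hcov
      constructor
      · intro h; exact absurd h h1.1
      · intro h
        exfalso
        rcases h with ⟨h, -⟩ | ⟨h, -⟩
        · exact h2.1 h
        · rcases h with ⟨hh, -⟩ | ⟨hh, -⟩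
          · exact h3.1 hh.1
          · exact h3.2 hh.1
  -- F2 is symmetric and included in P2 ×ˢ P2
  have hF2sub : F2 ⊆ P2 ×ˢ P2 := by
    rintro ⟨c, d⟩ ⟨Y, hY, Z, hZ, heq, -⟩
    rw [heq]
    exact Set.mem_prod.2 ⟨⟨Y, hY, rfl⟩, ⟨Z, hZ, rfl⟩⟩
  have hF2symm : SymmRelSet F2 := by
    rintro a b ⟨Y, hY, Z, hZ, heq, hnb⟩
    refine ⟨Z, hZ, Y, hY, ?_, ?_⟩
    · have e1 : a = pb Y := (Prod.ext_iff.1 heq).1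
      have e2 : b = pb Z := (Prod.ext_iff.1 heq).2
      rw [e1, e2]
    · simp only [hnbdef] at hnb ⊢
      exact xor_symm_helper (hsymmF (rep Y) (rep Z)) hnb
  -- cardinality
  have hP2card : P2.ncard ≤ k - 1 := by
    have hfin1 : P1.Finite := Set.toFinite P1
    have hc1 : P2.ncard ≤ P1.ncard := Set.ncard_image_le hfin1
    have hc2 : P1.ncard ≤ (P \ {X, X'}).ncard + 1 := Set.ncard_insert_le _ _
    have hsub : ({X, X'} : Set (Set (Fin (m + 2) × Fin n))) ⊆ P := by
      intro Y hY
      rcases hY with rfl | hY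
      · exact hX
      · rw [hY]; exact hX'
    have hc3 : (P \ {X, X'}).ncard = P.ncard - ({X, X'} : Set _).ncard :=
      Set.ncard_diff hsub (Set.toFinite _)
    have hc4 : ({X, X'} : Set (Set (Fin (m + 2) × Fin n))).ncard = 2 := Set.ncard_pair hXX'
    rw [hc3, hc4, hPk] at hc2
    omega
  -- coarsening
  have hP2coarse : IsCoarsening P2 (columnSet m n) := by
    refine ⟨⟨?_, hP2disj⟩, ?_⟩
    · rintro C ⟨Y, hY, rfl⟩
      exact hpbne Y hY
    · rintro C ⟨Y, hY, rfl⟩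
      obtain ⟨D, hD, hYeq⟩ := hP1cols Y hY
      refine ⟨{c | ∃ j : Fin n, c = column m n j ∧ column (m + 2) n j ∈ D}, ?_, ?_⟩
      · rintro c ⟨j, rfl, -⟩
        exact ⟨j, rfl⟩
      · ext zz
        constructor
        · intro hzz
          have : emb zz ∈ ⋃₀ D := by rw [← hYeq]; exact hzz
          obtain ⟨d, hd, hzd⟩ := this
          obtain ⟨j, rfl⟩ := hD hd
          exact ⟨column m n j, ⟨j, rfl, hd⟩, hzd⟩
        · rintro ⟨c, ⟨j, rfl, hjD⟩, hzc⟩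
          show emb zz ∈ Y
          rw [hYeq]
          exact ⟨column (m + 2) n j, hjD, hzc⟩
  -- the graph equality / isomorphism
  have hmain : ∀ zz zz' : Fin m × Fin n,
      ((pivotSeq G l).Adj (emb zz) (emb zz') ↔
        (collFlip (pathsGraph m n) P2 F2).Adj zz zz') := by
    intro zz zz'
    rw [hform (emb zz) (hembS zz) (emb zz') (hembS zz'),
      collFlip_adj _ P2 F2 hF2symm, hGadj_iff, hbit2, hembH]
    have hne : emb zz ≠ emb zz' ↔ zz ≠ zz' := by
      constructor
      · intro h hc; exact h (by rw [hc])
      · intro h hc; exact h (hembinj hc)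
    rw [hne]
    by_cases h : zz = zz'
    · subst h
      exact main_helper2 (fun hc => hc rfl)
    · exact main_helper h
  -- finish
  refine ⟨collFlip (pathsGraph m n) P2 F2, ⟨P2, F2, hP2coarse, hP2card, hF2sub, hF2symm, rfl⟩,
    l, S, hval, ⟨?_⟩⟩
  refine ⟨⟨fun zz => ⟨emb zz, hembS zz⟩, fun s => (ρ.symm ⟨s.1.1, s.2⟩, s.1.2), ?_, ?_⟩, ?_⟩
  · intro zz
    apply Prod.ext
    · show ρ.symm ⟨(emb zz).1, _⟩ = zz.1
      have he : (⟨(emb zz).1, hembS zz⟩ : {r : Fin (m + 2) // r ≠ i ∧ r ≠ i'}) = ρ zz.1 := by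
        apply Subtype.ext
        rfl
      rw [he, Equiv.symm_apply_apply]
    · rfl
  · intro s
    apply Subtype.ext
    apply Prod.ext
    · show ((ρ (ρ.symm ⟨s.1.1, s.2⟩) : {r : Fin (m + 2) // r ≠ i ∧ r ≠ i'}) : Fin (m + 2)) = s.1.1
      rw [Equiv.apply_symm_apply]
    · rfl
  · intro zz zz'
    exact Iff.trans (SimpleGraph.comap_adj) (hmain zz zz')
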